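/- Let λ be a partition of n, N_λ the normalizer of S_λ in S_n, and V the one-dimensional sign-twisted ℚN_λ-module (g acts by sgn(ḡ) where ḡ ∈ N_λ/S_λ). The multiplicity of the trivial S_n-representation in Ind_{N_λ}^{S_n} V is 1 if λ has no repeated parts, and 0 otherwise. -/

import Mathlib

/-- Young subgroup attached to a block labelling. -/
def Young (n : ℕ) (B : Fin n → ℕ) : Subgroup (Equiv.Perm (Fin n)) where
  carrier := {g | ∀ x, B (g x) = B x}
  one_mem' := fun _ => rfl
  mul_mem' := by
    intro a b ha hb x
    simpa [Equiv.Perm.mul_apply, hb x] using ha (b x)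
  inv_mem' := by
    intro a ha x
    simpa using (ha (a⁻¹ x)).symm

/-- Index of the consecutive block (of sizes `l`) containing `x`. -/
def blockIdx (n : ℕ) (l : List ℕ) (x : Fin n) : ℕ :=
  (List.range l.length).countP fun j => decide ((l.take (j + 1)).sum ≤ x.1)

/-- The minimal set partition of `Fin n` of shape `l`: consecutive intervals. -/
def stdPart (n : ℕ) (l : List ℕ) : Finset (Finset (Fin n)) :=
  (List.range l.length).toFinset.image fun j =>
    Finset.univ.filter fun x => blockIdx n l x = j

/-- Sorting key on blocks: decreasing size, then lexicographic. -/
def keyB (n : ℕ) (s : Finset (Fin n)) : ℕ :=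
  (n - s.card) * 4 ^ n + ∑ i ∈ s, 2 ^ (i : ℕ)

/-- The blocks of `P` in canonical order. -/
noncomputable def sortedBlocks (n : ℕ) (P : Finset (Finset (Fin n))) :
    List (Finset (Fin n)) :=
  P.toList.mergeSort fun s t => decide (keyB n s ≤ keyB n t)

/-- Number of inversions of a list of naturals. -/
def invCount : List ℕ → ℕ
  | [] => 0
  | a :: t => (t.countP fun b => decide (b < a)) + invCount t

/-- The sign `sgn(ḡ)` of the permutation of the blocks of `P` induced by `g`. -/
noncomputable def sgnP (n : ℕ) (g : Equiv.Perm (Fin n))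
    (P : Finset (Finset (Fin n))) : ℤ :=
  (-1) ^ invCount ((sortedBlocks n P).map fun s => keyB n (s.image g))

/-- The subspace of `S_n`-invariant vectors of the induced module `Ind_{N_λ}^{S_n} V`
over `ℚ`, the latter realised as the functions `f : S_n → ℚ` with
`f(hx) = sgn(h̄)·f(x)` for `h ∈ N_λ`, with `S_n` acting by right translation.
Its dimension is the multiplicity of the trivial representation in `Ind_{N_λ}^{S_n} V`. -/
noncomputable def InvInd (n : ℕ) (l : List ℕ) : Submodule ℚ (Equiv.Perm (Fin n) → ℚ) where
  carrier := {f | (∀ h ∈ Subgroup.normalizer (Young n (blockIdx n l) : Set (Equiv.Perm (Fin n))), ∀ x,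
      f (h * x) = (sgnP n h (stdPart n l) : ℚ) * f x) ∧
    ∀ g x, f (x * g) = f x}
  add_mem' := by
    intro f g hf hg
    refine ⟨fun h hh x => ?_, fun g' x => ?_⟩
    · simp only [Pi.add_apply, hf.1 h hh x, hg.1 h hh x]; ring
    · simp only [Pi.add_apply, hf.2 g' x, hg.2 g' x]
  zero_mem' := by
    constructor <;> intros <;> simp
  smul_mem' := by
    intro c f hf
    refine ⟨fun h hh x => ?_, fun g' x => ?_⟩
    · simp only [Pi.smul_apply, smul_eq_mul, hf.1 h hh x]; ring
    · simp only [Pi.smul_apply, hf.2 g' x]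



namespace Stmt13Aux

lemma sum_range_two_pow (b : ℕ) : ∑ i ∈ Finset.range b, 2 ^ i = 2 ^ b - 1 := by
  induction b with
  | zero => simp
  | succ b ih =>
    rw [Finset.sum_range_succ, ih]
    have h1 : 0 < 2 ^ b := pow_pos (by norm_num) b
    have h2 : 2 ^ (b + 1) = 2 ^ b * 2 := pow_succ 2 b
    omega

lemma sum_two_pow_lt {s : Finset ℕ} {b : ℕ} (h : ∀ i ∈ s, i < b) :
    ∑ i ∈ s, 2 ^ i < 2 ^ b := by
  have hsub : s ⊆ Finset.range b := fun i hi => Finset.mem_range.2 (h i hi)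
  have h1 : ∑ i ∈ s, 2 ^ i ≤ ∑ i ∈ Finset.range b, 2 ^ i :=
    Finset.sum_le_sum_of_subset hsub
  have h2 := sum_range_two_pow b
  have h3 : 0 < 2 ^ b := pow_pos (by norm_num) b
  omega

lemma sum_two_pow_lt_of (A B : Finset ℕ) {m : ℕ} (hmA : m ∈ A) (hB : ∀ a ∈ B, a < m) :
    ∑ i ∈ B, 2 ^ i < ∑ i ∈ A, 2 ^ i :=
  lt_of_lt_of_le (sum_two_pow_lt hB)
    (Finset.single_le_sum (fun i _ => Nat.zero_le _) hmA)

lemma sum_two_pow_inj {s t : Finset ℕ} (h : (∑ i ∈ s, 2 ^ i) = ∑ i ∈ t, 2 ^ i) :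
    s = t := by
  by_contra hne
  have hd : ((s \ t) ∪ (t \ s)).Nonempty := by
    rw [Finset.nonempty_iff_ne_empty]
    intro he
    rw [Finset.union_eq_empty, Finset.sdiff_eq_empty_iff_subset,
      Finset.sdiff_eq_empty_iff_subset] at he
    exact hne (Finset.Subset.antisymm he.1 he.2)
  set m := Finset.max' _ hd with hm
  have hmem : m ∈ (s \ t) ∪ (t \ s) := Finset.max'_mem _ hd
  have hmax : ∀ a ∈ (s \ t) ∪ (t \ s), a ≤ m := fun a ha => Finset.le_max' _ a ha
  have hst : (∑ i ∈ s \ t, 2 ^ i) = ∑ i ∈ t \ s, 2 ^ i := by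
    have h1 := Finset.sum_inter_add_sum_sdiff s t (fun i => 2 ^ i)
    have h2 := Finset.sum_inter_add_sum_sdiff t s (fun i => 2 ^ i)
    rw [Finset.inter_comm] at h2
    omega
  rcases Finset.mem_union.1 hmem with h1 | h1
  · have hB : ∀ a ∈ t \ s, a < m := by
      intro a ha
      have h2 := hmax a (Finset.mem_union_right _ ha)
      have h3 : a ≠ m := by
        intro e; subst e
        exact (Finset.mem_sdiff.1 ha).2 (Finset.mem_sdiff.1 h1).1
      omega
    have := sum_two_pow_lt_of (s \ t) (t \ s) h1 hB
    omega
  · have hB : ∀ a ∈ s \ t, a < m := by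
      intro a ha
      have h2 := hmax a (Finset.mem_union_left _ ha)
      have h3 : a ≠ m := by
        intro e; subst e
        exact (Finset.mem_sdiff.1 ha).2 (Finset.mem_sdiff.1 h1).1
      omega
    have := sum_two_pow_lt_of (t \ s) (s \ t) h1 hB
    omega

variable {n : ℕ}

lemma sum_two_pow_fin (s : Finset (Fin n)) :
    (∑ i ∈ s, 2 ^ (i : ℕ)) = ∑ i ∈ s.image Fin.val, 2 ^ i :=
  (Finset.sum_image (fun x _ y _ h => Fin.val_injective h)).symm

lemma minor_lt (s : Finset (Fin n)) : (∑ i ∈ s, 2 ^ (i : ℕ)) < 4 ^ n := by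
  rw [sum_two_pow_fin]
  have h1 : (∑ i ∈ s.image Fin.val, 2 ^ i) < 2 ^ n := by
    apply sum_two_pow_lt
    intro i hi
    obtain ⟨x, _, rfl⟩ := Finset.mem_image.1 hi
    exact x.isLt
  have h2 : (2:ℕ) ^ n ≤ 4 ^ n := Nat.pow_le_pow_left (by norm_num) n
  omega

lemma card_le_n (s : Finset (Fin n)) : s.card ≤ n := by
  simpa using Finset.card_le_univ s

end Stmt13Aux

-- keyB lemmas (assumes aux1 + keyB def)
namespace Stmt13Aux

lemma keyB_lt_of_card_lt {s t : Finset (Fin n)} (h : t.card < s.card) :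
    keyB n s < keyB n t := by
  unfold keyB
  have h1 := minor_lt s
  have h3 : n - s.card + 1 ≤ n - t.card := by have := card_le_n s; omega
  calc (n - s.card) * 4 ^ n + ∑ i ∈ s, 2 ^ (i : ℕ)
      < (n - s.card) * 4 ^ n + 4 ^ n := Nat.add_lt_add_left h1 _
    _ = (n - s.card + 1) * 4 ^ n := by ring
    _ ≤ (n - t.card) * 4 ^ n := Nat.mul_le_mul_right _ h3
    _ ≤ (n - t.card) * 4 ^ n + ∑ i ∈ t, 2 ^ (i : ℕ) := Nat.le_add_right _ _

lemma card_le_of_keyB_le {s t : Finset (Fin n)} (h : keyB n s ≤ keyB n t) :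
    t.card ≤ s.card := by
  by_contra hc
  push_neg at hc
  exact absurd h (not_le.2 (keyB_lt_of_card_lt hc))

lemma keyB_inj {s t : Finset (Fin n)} (h : keyB n s = keyB n t) : s = t := by
  have h1 : t.card ≤ s.card := card_le_of_keyB_le h.le
  have h2 : s.card ≤ t.card := card_le_of_keyB_le h.ge
  have hc : s.card = t.card := le_antisymm h2 h1
  unfold keyB at h
  rw [hc] at h
  have h3 := Nat.add_left_cancel h
  have h4 := sum_two_pow_fin s
  have h5 := sum_two_pow_fin t
  have h6 : s.image Fin.val = t.image Fin.val := sum_two_pow_inj (by omega)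
  exact Finset.image_injective Fin.val_injective h6

lemma minor_lt_minor_of_keyB_lt {s t : Finset (Fin n)} (hc : s.card = t.card)
    (h : keyB n s < keyB n t) : (∑ i ∈ s, 2 ^ (i : ℕ)) < ∑ i ∈ t, 2 ^ (i : ℕ) := by
  unfold keyB at h
  rw [hc] at h
  exact Nat.lt_of_add_lt_add_left h

lemma keyB_lt_of_minor_lt {s t : Finset (Fin n)} (hc : s.card = t.card)
    (h : (∑ i ∈ s, 2 ^ (i : ℕ)) < ∑ i ∈ t, 2 ^ (i : ℕ)) : keyB n s < keyB n t := by
  unfold keyB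
  rw [hc]
  exact Nat.add_lt_add_left h _

-- invCount lemmas

lemma invCount_cons (a : ℕ) (t : List ℕ) :
    invCount (a :: t) = (t.countP fun b => decide (b < a)) + invCount t := rfl

lemma invCount_zero {L : List ℕ} (h : L.Pairwise (· ≤ ·)) : invCount L = 0 := by
  induction L with
  | nil => rfl
  | cons a t ih =>
    rw [List.pairwise_cons] at h
    rw [invCount_cons, ih h.2, List.countP_eq_zero.2]
    intro b hb
    simpa using not_lt.2 (h.1 b hb)

lemma invCount_swap {A C : List ℕ} {x y : ℕ} (hxy : x < y)
    (h : (A ++ x :: y :: C).Pairwise (· ≤ ·)) : invCount (A ++ y :: x :: C) = 1 := by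
  induction A with
  | nil =>
    rw [List.nil_append] at h ⊢
    rw [List.pairwise_cons] at h
    obtain ⟨h1, h2⟩ := h
    rw [List.pairwise_cons] at h2
    obtain ⟨h3, h4⟩ := h2
    rw [invCount_cons, invCount_cons]
    rw [invCount_zero h4]
    have e1 : (List.countP (fun b => decide (b < y)) (x :: C)) = 1 := by
      rw [List.countP_cons]
      rw [List.countP_eq_zero.2 (fun b hb => by simpa using not_lt.2 (h3 b hb))]
      simp [hxy]
    have e2 : (List.countP (fun b => decide (b < x)) C) = 0 :=
      List.countP_eq_zero.2 (fun b hb => by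
        simpa using not_lt.2 (h1 b (List.mem_cons_of_mem _ hb)))
    omega
  | cons z A' ih =>
    rw [List.cons_append] at h ⊢
    rw [List.pairwise_cons] at h
    obtain ⟨h1, h2⟩ := h
    rw [invCount_cons, ih h2]
    have e : (List.countP (fun b => decide (b < z)) (A' ++ y :: x :: C)) = 0 := by
      apply List.countP_eq_zero.2
      intro b hb
      have hb' : b ∈ A' ++ x :: y :: C := by
        simp only [List.mem_append, List.mem_cons] at hb ⊢
        tauto
      simpa using not_lt.2 (h1 b hb')
    omega

-- partial sums
lemma sum_take_le (m : List ℕ) (k : ℕ) : (m.take k).sum ≤ m.sum := by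
  conv_rhs => rw [← List.take_append_drop k m]
  rw [List.sum_append]
  exact Nat.le_add_right _ _

lemma pS_mono (l : List ℕ) {k k' : ℕ} (h : k ≤ k') :
    (l.take k).sum ≤ (l.take k').sum := by
  rw [show l.take k = (l.take k').take k by
    rw [List.take_take, Nat.min_eq_left h]]
  exact sum_take_le _ _

lemma pS_succ (l : List ℕ) {i : ℕ} (h : i < l.length) :
    (l.take (i + 1)).sum = (l.take i).sum + l[i] :=
  List.sum_take_succ l i h

lemma countP_range_iff (q : ℕ → Prop) [DecidablePred q]
    (hq : ∀ i j : ℕ, i ≤ j → q j → q i) (k : ℕ) :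
    ∀ j < k, (q j ↔ j < (List.range k).countP fun i => decide (q i)) := by
  induction k with
  | zero => intro j hj; omega
  | succ k ih =>
    intro j hj
    rw [List.range_succ, List.countP_append]
    have hsingle : List.countP (fun i => decide (q i)) [k] = if q k then 1 else 0 := by
      simp [List.countP_cons]
    rw [hsingle]
    by_cases hk : q k
    · have hall : (List.range k).countP (fun i => decide (q i)) = k := by
        have := List.countP_eq_length (l := List.range k) (p := fun i => decide (q i))
        rw [List.length_range] at this
        exact this.2 (fun a ha => by
          simp only [decide_eq_true_eq]
          exact hq a k (le_of_lt (List.mem_range.1 ha)) hk)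
      rw [hall, if_pos hk]
      constructor
      · intro _; omega
      · intro _; exact hq j k (by omega) hk
    · rw [if_neg hk]
      rcases Nat.lt_or_ge j k with hjk | hjk
      · simpa using ih j hjk
      · have hjk' : j = k := by omega
        subst hjk'
        have hle := List.countP_le_length (p := fun i => decide (q i)) (l := List.range j)
        rw [List.length_range] at hle
        simp only [Nat.add_zero]
        exact ⟨fun hqq => absurd hqq hk, fun hlt => by omega⟩

end Stmt13Aux

namespace Stmt13Aux

/-- The `i`-th block. -/
def blk (n : ℕ) (l : List ℕ) (i : ℕ) : Finset (Fin n) :=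
  Finset.univ.filter fun x => blockIdx n l x = i

lemma mem_blk {n : ℕ} {l : List ℕ} {i : ℕ} {x : Fin n} :
    x ∈ blk n l i ↔ blockIdx n l x = i := by
  simp [blk]

lemma mem_stdPart {n : ℕ} {l : List ℕ} {s : Finset (Fin n)} :
    s ∈ stdPart n l ↔ ∃ i < l.length, s = blk n l i := by
  simp only [stdPart, Finset.mem_image, List.mem_toFinset, List.mem_range, blk]
  constructor
  · rintro ⟨i, hi, rfl⟩; exact ⟨i, hi, rfl⟩
  · rintro ⟨i, hi, rfl⟩; exact ⟨i, hi, rfl⟩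

lemma sum_Ico_two_pow {a b : ℕ} (h : a ≤ b) :
    ∑ i ∈ Finset.Ico a b, 2 ^ i = 2 ^ b - 2 ^ a := by
  have h1 := Finset.sum_Ico_consecutive (fun i => 2 ^ i) (Nat.zero_le a) h
  rw [← Finset.range_eq_Ico, ← Finset.range_eq_Ico] at h1
  rw [sum_range_two_pow, sum_range_two_pow] at h1
  have h1' : 2 ^ a - 1 + ∑ i ∈ Finset.Ico a b, 2 ^ i = 2 ^ b - 1 := h1
  have h2 : (2:ℕ) ^ a ≤ 2 ^ b := Nat.pow_le_pow_right (by norm_num) h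
  have h3 : 0 < 2 ^ a := pow_pos (by norm_num) a
  omega

section
variable {n : ℕ} {l : List ℕ} (hsum : l.sum = n)

lemma blockIdx_iff (x : Fin n) :
    ∀ j < l.length, ((l.take (j + 1)).sum ≤ x.1 ↔ j < blockIdx n l x) := by
  have := countP_range_iff (fun j => (l.take (j + 1)).sum ≤ x.1)
    (fun i j hij hj => le_trans (pS_mono l (by omega)) hj) l.length
  exact this

include hsum

lemma blockIdx_lt (x : Fin n) : blockIdx n l x < l.length := by
  have hn : 0 < n := x.pos
  have hlen : 0 < l.length := by
    rcases l with _ | ⟨a, t⟩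
    · simp at hsum; omega
    · simp
  have hlast := (blockIdx_iff (l := l) x (l.length - 1) (by omega)).not
  rw [show l.length - 1 + 1 = l.length from by omega] at hlast
  have hx : ¬ (l.take l.length).sum ≤ x.1 := by
    rw [List.take_length, hsum]
    exact not_le.2 x.isLt
  have := hlast.1 hx
  omega

lemma blockIdx_spec (x : Fin n) :
    (l.take (blockIdx n l x)).sum ≤ x.1 ∧
      x.1 < (l.take (blockIdx n l x + 1)).sum := by
  have hlt := blockIdx_lt hsum x
  constructor
  · rcases Nat.eq_zero_or_pos (blockIdx n l x) with h0 | h0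
    · rw [h0]; simp
    · have := (blockIdx_iff (l := l) x (blockIdx n l x - 1) (by omega)).2 (by omega)
      rw [show blockIdx n l x - 1 + 1 = blockIdx n l x from by omega] at this
      exact this
  · have := (blockIdx_iff (l := l) x (blockIdx n l x) hlt).not.2 (by omega)
    omega

lemma blockIdx_eq_iff (x : Fin n) {i : ℕ} (hi : i < l.length) :
    blockIdx n l x = i ↔
      ((l.take i).sum ≤ x.1 ∧ x.1 < (l.take (i + 1)).sum) := by
  constructor
  · rintro rfl; exact blockIdx_spec hsum x
  · rintro ⟨h1, h2⟩
    have hspec := blockIdx_spec hsum x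
    set c := blockIdx n l x with hc
    by_contra hne
    rcases Nat.lt_or_ge c i with hci | hci
    · have : (l.take (c + 1)).sum ≤ (l.take i).sum := pS_mono l (by omega)
      omega
    · have hic : i < c := by omega
      have : (l.take (i + 1)).sum ≤ (l.take c).sum := pS_mono l (by omega)
      omega

variable (hpos : ∀ p ∈ l, 1 ≤ p)
include hpos

lemma blk_image_val {i : ℕ} (hi : i < l.length) :
    (blk n l i).image Fin.val =
      Finset.Ico ((l.take i).sum) ((l.take (i + 1)).sum) := by
  ext y
  simp only [Finset.mem_image, mem_blk, Finset.mem_Ico]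
  constructor
  · rintro ⟨x, hx, rfl⟩
    exact (blockIdx_eq_iff hsum x hi).1 hx
  · rintro ⟨h1, h2⟩
    have hy : y < n := by
      have : (l.take (i + 1)).sum ≤ n := by
        rw [← hsum]; exact sum_take_le _ _
      omega
    exact ⟨⟨y, hy⟩, (blockIdx_eq_iff hsum ⟨y, hy⟩ hi).2 ⟨h1, h2⟩, rfl⟩

lemma card_blk {i : ℕ} (hi : i < l.length) : (blk n l i).card = l[i] := by
  have h1 := blk_image_val hsum hpos hi
  have h2 : ((blk n l i).image Fin.val).card = (blk n l i).card :=
    Finset.card_image_of_injective _ Fin.val_injective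
  rw [h1, Nat.card_Ico, pS_succ l hi] at h2
  omega

lemma minor_blk {i : ℕ} (hi : i < l.length) :
    (∑ x ∈ blk n l i, 2 ^ (x : ℕ)) =
      2 ^ ((l.take (i + 1)).sum) - 2 ^ ((l.take i).sum) := by
  rw [sum_two_pow_fin, blk_image_val hsum hpos hi,
    sum_Ico_two_pow (pS_mono l (by omega))]

lemma blk_inj {i i' : ℕ} (hi : i < l.length) (hi' : i' < l.length)
    (h : blk n l i = blk n l i') : i = i' := by
  have hc : (blk n l i).Nonempty := by
    rw [← Finset.card_pos, card_blk hsum hpos hi]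
    exact hpos _ (List.getElem_mem hi)
  obtain ⟨x, hx⟩ := hc
  have h1 := mem_blk.1 hx
  have h2 := mem_blk.1 (h ▸ hx)
  omega

end
end Stmt13Aux

namespace Stmt13Aux

lemma sortedBlocks_pairwise {n : ℕ} (P : Finset (Finset (Fin n))) :
    (sortedBlocks n P).Pairwise fun s t => keyB n s ≤ keyB n t := by
  have h := List.pairwise_mergeSort
    (le := fun s t : Finset (Fin n) => decide (keyB n s ≤ keyB n t))
    (fun a b c hab hbc => by
      simp only [decide_eq_true_eq] at *; omega)
    (fun a b => by
      simp only [Bool.or_eq_true, decide_eq_true_eq]; omega)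
    P.toList
  exact h.imp (fun hab => by simpa using hab)

lemma mem_sortedBlocks {n : ℕ} {P : Finset (Finset (Fin n))} {s : Finset (Fin n)} :
    s ∈ sortedBlocks n P ↔ s ∈ P := by
  unfold sortedBlocks
  rw [(List.mergeSort_perm P.toList _).mem_iff, Finset.mem_toList]

lemma sortedBlocks_nodup {n : ℕ} (P : Finset (Finset (Fin n))) :
    (sortedBlocks n P).Nodup :=
  ((List.mergeSort_perm P.toList _).nodup_iff).2 (Finset.nodup_toList _)

lemma sgnP_eq_one {n : ℕ} {l : List ℕ} (hsum : l.sum = n) (hpos : ∀ p ∈ l, 1 ≤ p)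
    (hnd : l.Nodup) (g : Equiv.Perm (Fin n)) :
    sgnP n g (stdPart n l) = 1 := by
  unfold sgnP
  rw [invCount_zero, pow_zero]
  rw [List.pairwise_map]
  have hnd' : (sortedBlocks n (stdPart n l)).Pairwise (· ≠ ·) := sortedBlocks_nodup _
  refine List.Pairwise.imp_of_mem ?_
    ((sortedBlocks_pairwise (stdPart n l)).and hnd')
  intro s t hs ht hst
  obtain ⟨hkey, hne⟩ := hst
  obtain ⟨i, hi, rfl⟩ := mem_stdPart.1 (mem_sortedBlocks.1 hs)
  obtain ⟨i', hi', rfl⟩ := mem_stdPart.1 (mem_sortedBlocks.1 ht)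
  have hii : i ≠ i' := fun e => hne (by rw [e])
  have hcard : (blk n l i').card < (blk n l i).card := by
    have h1 : (blk n l i').card ≤ (blk n l i).card := card_le_of_keyB_le hkey
    have h2 : (blk n l i).card ≠ (blk n l i').card := by
      rw [card_blk hsum hpos hi, card_blk hsum hpos hi']
      exact fun e => hii ((hnd.getElem_inj_iff).1 e)
    omega
  apply le_of_lt
  apply keyB_lt_of_card_lt
  rwa [Finset.card_image_of_injective _ g.injective,
    Finset.card_image_of_injective _ g.injective]

end Stmt13Aux

namespace Stmt13Aux

def phi (a m x : ℕ) : ℕ :=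
  if x < a then x else if x < a + m then x + m else if x < a + 2 * m then x - m else x

lemma phi_invol (a m x : ℕ) : phi a m (phi a m x) = x := by
  unfold phi; split_ifs <;> omega

def swp (n a m : ℕ) (h : a + 2 * m ≤ n) : Equiv.Perm (Fin n) :=
  Function.Involutive.toPerm
    (fun x => ⟨phi a m x.1, by unfold phi; have := x.isLt; split_ifs <;> omega⟩)
    (fun x => Fin.ext (phi_invol a m x.1))

lemma swp_val {n a m : ℕ} (h : a + 2 * m ≤ n) (x : Fin n) :
    ((swp n a m h) x).1 = phi a m x.1 := rfl

lemma swp_invol {n a m : ℕ} (h : a + 2 * m ≤ n) (x : Fin n) :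
    (swp n a m h) ((swp n a m h) x) = x := Fin.ext (phi_invol a m x.1)

lemma swp_inv {n a m : ℕ} (h : a + 2 * m ≤ n) :
    (swp n a m h)⁻¹ = swp n a m h := by
  apply inv_eq_of_mul_eq_one_right
  ext x
  exact congrArg Fin.val (swp_invol h x)

def swapIdx (j i : ℕ) : ℕ := if i = j then j + 1 else if i = j + 1 then j else i

lemma swapIdx_invol (j i : ℕ) : swapIdx j (swapIdx j i) = i := by
  unfold swapIdx; split_ifs <;> omega

lemma exists_adj_dup {l : List ℕ} (hsort : l.Pairwise (· ≥ ·)) (hnd : ¬ l.Nodup) :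
    ∃ j, ∃ (h : j + 1 < l.length), l[j]'(Nat.lt_of_succ_lt h) = l[j + 1]'h := by
  by_contra hcon
  push_neg at hcon
  apply hnd
  have hsorted := List.pairwise_iff_getElem.1 hsort
  have hstep : ∀ k (hk : k + 1 < l.length), l[k + 1] < l[k] := by
    intro k hk
    have h1 := hsorted k (k + 1) (by omega) hk (by omega)
    have h2 := hcon k hk
    omega
  have hdesc : ∀ d i (hi : i + d + 1 < l.length), l[i + d + 1]'hi < l[i]'(by omega) := by
    intro d
    induction d with
    | zero => intro i hi; simpa using hstep i (by simpa using hi)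
    | succ d ih =>
      intro i hi
      have h1 := ih i (by omega)
      have h2 := hstep (i + d + 1) (by omega)
      have h3 : l[i + (d + 1) + 1]'hi = l[i + d + 1 + 1]'(by omega) := by
        congr 1
      rw [h3]
      omega
  unfold List.Nodup
  rw [List.pairwise_iff_getElem]
  intro i j hi hj hij
  have h4 : l[j]'hj = l[i + (j - i - 1) + 1]'(by omega) := by
    congr 1; omega
  rw [h4]
  have := hdesc (j - i - 1) i (by omega)
  omega

lemma exists_neg {n : ℕ} {l : List ℕ} (hsum : l.sum = n) (hpos : ∀ p ∈ l, 1 ≤ p)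
    (hsort : l.Pairwise (· ≥ ·)) (hnd : ¬ l.Nodup) :
    ∃ σ ∈ Subgroup.normalizer (Young n (blockIdx n l) : Set (Equiv.Perm (Fin n))), sgnP n σ (stdPart n l) = -1 := by
  obtain ⟨j, hj, hjj⟩ := exists_adj_dup hsort hnd
  obtain ⟨a, ha0⟩ : ∃ a, (l.take j).sum = a := ⟨_, rfl⟩
  obtain ⟨m, hm0⟩ : ∃ m, l[j]'(Nat.lt_of_succ_lt hj) = m := ⟨_, rfl⟩
  have hm1 : 1 ≤ m := hm0 ▸ hpos _ (List.getElem_mem _)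
  have ha1 : (l.take (j + 1)).sum = a + m := by
    rw [pS_succ l (Nat.lt_of_succ_lt hj), ha0, hm0]
  have ha2 : (l.take (j + 2)).sum = a + 2 * m := by
    have h := pS_succ l hj
    rw [ha1, ← hjj, hm0] at h
    rw [show j + 2 = j + 1 + 1 from by omega, h]
    omega
  have hle : a + 2 * m ≤ n := by
    have h1 : (l.take (j + 2)).sum ≤ l.sum := sum_take_le l _
    omega
  set σ := swp n a m hle with hσ
  have hinvol : ∀ y, σ (σ y) = y := swp_invol hle
  -- blockIdx behaviour
  have hbi : ∀ x : Fin n, blockIdx n l (σ x) = swapIdx j (blockIdx n l x) := by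
    intro x
    have hspec := blockIdx_spec hsum x
    have hclt := blockIdx_lt hsum x
    by_cases hc1 : blockIdx n l x = j
    · rw [hc1] at hspec
      have hx1 : a ≤ x.1 := by rw [← ha0]; exact hspec.1
      have hx2 : x.1 < a + m := by rw [← ha1]; exact hspec.2
      have hv : (σ x).1 = x.1 + m := by
        rw [hσ, swp_val]; unfold phi; split_ifs <;> omega
      have hres : blockIdx n l (σ x) = j + 1 := by
        rw [blockIdx_eq_iff hsum _ hj, hv, ha1]
        have e2 : j + 1 + 1 = j + 2 := by omega
        rw [e2, ha2]
        omega
      rw [hres, hc1]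
      unfold swapIdx; simp
    · by_cases hc2 : blockIdx n l x = j + 1
      · rw [hc2] at hspec
        have hx1 : a + m ≤ x.1 := by rw [← ha1]; exact hspec.1
        have hx2 : x.1 < a + 2 * m := by
          rw [← ha2]
          have e2 : j + 2 = j + 1 + 1 := by omega
          rw [e2]
          exact hspec.2
        have hv : (σ x).1 = x.1 - m := by
          rw [hσ, swp_val]; unfold phi; split_ifs <;> omega
        have hres : blockIdx n l (σ x) = j := by
          rw [blockIdx_eq_iff hsum _ (Nat.lt_of_succ_lt hj), hv, ha1, ha0]
          omega
        rw [hres, hc2]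
        unfold swapIdx; simp
      · have hout : x.1 < a ∨ a + 2 * m ≤ x.1 := by
          rcases Nat.lt_or_ge (blockIdx n l x) j with h1 | h1
          · left
            have h2 : (l.take (blockIdx n l x + 1)).sum ≤ (l.take j).sum :=
              pS_mono l (by omega)
            have h3 := hspec.2
            rw [← ha0]
            omega
          · right
            have h1' : j + 2 ≤ blockIdx n l x := by omega
            have h2 : (l.take (j + 2)).sum ≤ (l.take (blockIdx n l x)).sum := pS_mono l h1'
            have h3 := hspec.1
            rw [← ha2]
            omega
        have hv : σ x = x := by
          apply Fin.ext
          rw [hσ, swp_val]; unfold phi; split_ifs <;> omega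
        rw [hv]
        unfold swapIdx
        rw [if_neg hc1, if_neg hc2]
  -- normalizer membership
  have hnorm : σ ∈ Subgroup.normalizer (Young n (blockIdx n l) : Set (Equiv.Perm (Fin n))) := by
    rw [Subgroup.mem_normalizer_iff]
    intro g
    constructor
    · intro hg x
      have e1 : (σ * g * σ⁻¹) x = σ (g (σ x)) := by
        rw [swp_inv hle]; rfl
      rw [e1, hbi, hg (σ x), hbi, swapIdx_invol]
    · intro hg x
      have h1 := hg (σ x)
      have e1 : (σ * g * σ⁻¹) (σ x) = σ (g x) := by
        rw [swp_inv hle]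
        show σ (g (σ (σ x))) = σ (g x)
        rw [hinvol]
      rw [e1, hbi, hbi] at h1
      have := congrArg (swapIdx j) h1
      rwa [swapIdx_invol, swapIdx_invol] at this
  refine ⟨σ, hnorm, ?_⟩
  -- image of blocks
  have himg : ∀ i, (blk n l i).image ⇑σ = blk n l (swapIdx j i) := by
    intro i
    ext y
    simp only [Finset.mem_image, mem_blk]
    constructor
    · rintro ⟨x, hx, rfl⟩
      rw [hbi, hx]
    · intro hy
      refine ⟨σ y, ?_, hinvol y⟩
      rw [hbi, hy, swapIdx_invol]
  -- cards and minors
  have hcj : (blk n l j).card = m := by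
    rw [card_blk hsum hpos (Nat.lt_of_succ_lt hj), hm0]
  have hcj1 : (blk n l (j + 1)).card = m := by
    rw [card_blk hsum hpos hj, ← hjj, hm0]
  have hmj : (∑ x ∈ blk n l j, 2 ^ (x : ℕ)) = 2 ^ (a + m) - 2 ^ a := by
    rw [minor_blk hsum hpos (Nat.lt_of_succ_lt hj), ha1, ha0]
  have hmj1 : (∑ x ∈ blk n l (j + 1), 2 ^ (x : ℕ)) = 2 ^ (a + 2 * m) - 2 ^ (a + m) := by
    rw [minor_blk hsum hpos hj, ha2, ha1]
  have hp1 : 2 ^ a * 2 ≤ 2 ^ (a + m) := by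
    calc 2 ^ a * 2 = 2 ^ (a + 1) := (pow_succ 2 a).symm
      _ ≤ 2 ^ (a + m) := Nat.pow_le_pow_right (by norm_num) (by omega)
  have hp2 : 2 ^ (a + m) * 2 ≤ 2 ^ (a + 2 * m) := by
    calc 2 ^ (a + m) * 2 = 2 ^ (a + m + 1) := (pow_succ 2 (a + m)).symm
      _ ≤ 2 ^ (a + 2 * m) := Nat.pow_le_pow_right (by norm_num) (by omega)
  have hp3 : 0 < 2 ^ a := pow_pos (by norm_num) a
  have hp4 : 2 ^ a ≤ 2 ^ (a + m) := by omega
  have hkeylt : keyB n (blk n l j) < keyB n (blk n l (j + 1)) := by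
    apply keyB_lt_of_minor_lt (hcj.trans hcj1.symm)
    rw [hmj, hmj1]
    calc 2 ^ (a + m) - 2 ^ a < 2 ^ (a + m) :=
          Nat.sub_lt (pow_pos (by norm_num) _) hp3
      _ ≤ 2 ^ (a + 2 * m) - 2 ^ (a + m) :=
          Nat.le_sub_of_add_le (by rw [← Nat.mul_two]; exact hp2)
  -- the sorted list
  set L := sortedBlocks n (stdPart n l) with hL
  have hLpw := sortedBlocks_pairwise (stdPart n l)
  have hLnd := sortedBlocks_nodup (stdPart n l)
  have hmemj : blk n l j ∈ L := mem_sortedBlocks.2 (mem_stdPart.2 ⟨j, by omega, rfl⟩)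
  have hmemj1 : blk n l (j + 1) ∈ L := mem_sortedBlocks.2 (mem_stdPart.2 ⟨j + 1, hj, rfl⟩)
  obtain ⟨p, hp, hpv⟩ := List.mem_iff_getElem.1 hmemj
  obtain ⟨q, hq, hqv⟩ := List.mem_iff_getElem.1 hmemj1
  have hpw' := List.pairwise_iff_getElem.1 hLpw
  have hstrict : ∀ r r' (hr : r < L.length) (hr' : r' < L.length), r < r' →
      keyB n (L[r]'hr) < keyB n (L[r']'hr') := by
    intro r r' hr hr' hlt
    have h1 := hpw' r r' hr hr' hlt
    have h2 : L[r]'hr ≠ L[r']'hr' := fun e => by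
      have := (hLnd.getElem_inj_iff).1 e; omega
    exact lt_of_le_of_ne h1 (fun e => h2 (keyB_inj e))
  have hpq : p < q := by
    rcases lt_trichotomy p q with h | h | h
    · exact h
    · exfalso
      subst h
      rw [hpv] at hqv
      rw [hqv] at hkeylt
      exact lt_irrefl _ hkeylt
    · exfalso
      have := hstrict q p hq hp h
      rw [hpv, hqv] at this
      omega
  have hadj : q = p + 1 := by
    by_contra hne
    have hp1q : p + 1 < q := by omega
    have hp1L : p + 1 < L.length := by omega
    have hk1 : keyB n (blk n l j) < keyB n (L[p + 1]'hp1L) := by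
      have := hstrict p (p + 1) hp hp1L (by omega)
      rwa [hpv] at this
    have hk2 : keyB n (L[p + 1]'hp1L) < keyB n (blk n l (j + 1)) := by
      have := hstrict (p + 1) q hp1L hq hp1q
      rwa [hqv] at this
    obtain ⟨i, hi, hir⟩ := mem_stdPart.1 (mem_sortedBlocks.1 (List.getElem_mem hp1L))
    rw [hir] at hk1 hk2
    have hcr : (blk n l i).card = m := by
      have h1 : (blk n l i).card ≤ (blk n l j).card := card_le_of_keyB_le hk1.le
      have h2 : (blk n l (j + 1)).card ≤ (blk n l i).card := card_le_of_keyB_le hk2.le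
      omega
    have hli : l[i] = m := by rw [← card_blk hsum hpos hi, hcr]
    have hii : i ≠ j := fun e => by rw [e] at hk1; omega
    have hii1 : i ≠ j + 1 := fun e => by rw [e] at hk2; omega
    have hmi : (∑ x ∈ blk n l i, 2 ^ (x : ℕ)) =
        2 ^ ((l.take i).sum + m) - 2 ^ ((l.take i).sum) := by
      rw [minor_blk hsum hpos hi, pS_succ l hi, hli]
    have hq1 : 2 ^ ((l.take i).sum) ≤ 2 ^ ((l.take i).sum + m) := 
      Nat.pow_le_pow_right (by norm_num) (by omega)
    rcases Nat.lt_or_ge i j with hij | hij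
    · -- i < j : minor of blk i is too small
      have hs1 : (l.take (i + 1)).sum ≤ a := by
        rw [← ha0]; exact pS_mono l (by omega)
      rw [pS_succ l hi, hli] at hs1
      have hq2 : 2 ^ ((l.take i).sum + m) ≤ 2 ^ a :=
        Nat.pow_le_pow_right (by norm_num) (by omega)
      have hlt2 := minor_lt_minor_of_keyB_lt (hcj.trans hcr.symm) hk1
      rw [hmj, hmi] at hlt2
      have h5 : 2 ^ ((l.take i).sum + m) - 2 ^ ((l.take i).sum) ≤ 2 ^ a :=
        le_trans (Nat.sub_le _ _) hq2
      have h6 : 2 ^ a ≤ 2 ^ (a + m) - 2 ^ a :=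
        Nat.le_sub_of_add_le (by rw [← Nat.mul_two]; exact hp1)
      exact absurd hlt2 (not_lt.2 (le_trans h5 h6))
    · have hij' : j + 2 ≤ i := by omega
      have hs1 : a + 2 * m ≤ (l.take i).sum := by
        rw [← ha2]; exact pS_mono l hij'
      have hq2 : 2 ^ (a + 2 * m) ≤ 2 ^ ((l.take i).sum) :=
        Nat.pow_le_pow_right (by norm_num) (by omega)
      have hq3 : 2 ^ ((l.take i).sum) * 2 ≤ 2 ^ ((l.take i).sum + m) := by
        calc 2 ^ ((l.take i).sum) * 2 = 2 ^ ((l.take i).sum + 1) := (pow_succ _ _).symm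
          _ ≤ 2 ^ ((l.take i).sum + m) := Nat.pow_le_pow_right (by norm_num) (by omega)
      have hlt2 := minor_lt_minor_of_keyB_lt (hcr.trans hcj1.symm) hk2
      rw [hmj1, hmi] at hlt2
      have h5 : 2 ^ (a + 2 * m) - 2 ^ (a + m) ≤ 2 ^ (a + 2 * m) := Nat.sub_le _ _
      have h7 : 2 ^ ((l.take i).sum) ≤ 2 ^ ((l.take i).sum + m) - 2 ^ ((l.take i).sum) :=
        Nat.le_sub_of_add_le (by rw [← Nat.mul_two]; exact hq3)
      exact absurd hlt2 (not_lt.2 (le_trans h5 (le_trans hq2 h7)))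
  -- decomposition
  subst hadj
  have hp1L : p + 1 < L.length := hq
  have hdec : L = L.take p ++ blk n l j :: blk n l (j + 1) :: L.drop (p + 2) := by
    conv_lhs => rw [← List.take_append_drop p L]
    rw [List.drop_eq_getElem_cons (by omega : p < L.length),
      List.drop_eq_getElem_cons hp1L, hpv, hqv]
  have hnd2 : (L.take p ++ blk n l j :: blk n l (j + 1) :: L.drop (p + 2)).Nodup := by
    rw [← hdec]; exact hLnd
  rw [List.nodup_append] at hnd2
  obtain ⟨hndT, hndR, hdisj⟩ := hnd2
  rw [List.nodup_cons] at hndR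
  have hbj_ne : blk n l j ≠ blk n l (j + 1) := fun e => by rw [e] at hkeylt; omega
  -- the map over other blocks is identity on keys
  have hother : ∀ s ∈ L, s ≠ blk n l j → s ≠ blk n l (j + 1) →
      keyB n (s.image ⇑σ) = keyB n s := by
    intro s hsL hs1 hs2
    obtain ⟨i, hi, rfl⟩ := mem_stdPart.1 (mem_sortedBlocks.1 hsL)
    have hij : i ≠ j := fun e => hs1 (by rw [e])
    have hij1 : i ≠ j + 1 := fun e => hs2 (by rw [e])
    rw [himg i]
    unfold swapIdx
    rw [if_neg hij, if_neg hij1]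
  have hmap : L.map (fun s => keyB n (s.image ⇑σ)) =
      (L.take p).map (keyB n) ++ keyB n (blk n l (j + 1)) :: keyB n (blk n l j) ::
        (L.drop (p + 2)).map (keyB n) := by
    conv_lhs => rw [hdec]
    rw [List.map_append, List.map_cons, List.map_cons]
    congr 1
    · apply List.map_congr_left
      intro s hs
      apply hother s (by rw [hdec]; exact List.mem_append_left _ hs)
      · intro e; exact hdisj s hs s (by rw [e]; exact List.mem_cons_self ..) rfl
      · intro e
        exact hdisj s hs s (by rw [e]; exact List.mem_cons_of_mem _ (List.mem_cons_self ..)) rfl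
    congr 1
    · rw [himg j]; unfold swapIdx; simp
    congr 1
    · rw [himg (j + 1)]
      unfold swapIdx
      rw [if_neg (by omega), if_pos rfl]
    · apply List.map_congr_left
      intro s hs
      have hsL : s ∈ L := by
        rw [hdec]
        exact List.mem_append_right _ (List.mem_cons_of_mem _ (List.mem_cons_of_mem _ hs))
      apply hother s hsL
      · intro e; rw [e] at hs; exact hndR.1 (List.mem_cons_of_mem _ hs)
      · intro e; rw [e] at hs; exact (List.nodup_cons.1 hndR.2).1 hs
  have hKpw : (L.map (keyB n)).Pairwise (· ≤ ·) := List.pairwise_map.2 hLpw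
  have hKdec : L.map (keyB n) = (L.take p).map (keyB n) ++
      keyB n (blk n l j) :: keyB n (blk n l (j + 1)) :: (L.drop (p + 2)).map (keyB n) := by
    conv_lhs => rw [hdec]
    simp [List.map_append]
  rw [hKdec] at hKpw
  unfold sgnP
  rw [← hL, hmap, invCount_swap hkeylt hKpw]
  norm_num

end Stmt13Aux

/-- The multiplicity of the trivial `S_n`-representation in `Ind_{N_λ}^{S_n} V` is `1`
if the partition `λ` has no repeated parts, and `0` otherwise. -/
theorem stmt13 (n : ℕ) (l : List ℕ) (hsort : l.Pairwise (· ≥ ·))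
    (hpos : ∀ p ∈ l, 1 ≤ p) (hsum : l.sum = n) :
    Module.finrank ℚ (InvInd n l) = if l.Nodup then 1 else 0 := by
  classical
  by_cases hnd : l.Nodup
  · rw [if_pos hnd]
    have hspan : InvInd n l =
        Submodule.span ℚ {(fun _ => (1 : ℚ) : Equiv.Perm (Fin n) → ℚ)} := by
      apply le_antisymm
      · intro f hf
        obtain ⟨hf1, hf2⟩ := hf
        have hconst : ∀ x, f x = f 1 := by
          intro x
          have h := hf2 x 1
          rwa [one_mul] at h
        rw [Submodule.mem_span_singleton]
        refine ⟨f 1, ?_⟩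
        funext x
        simp [hconst x]
      · rw [Submodule.span_le]
        intro f hf
        rw [Set.mem_singleton_iff] at hf
        subst hf
        refine ⟨fun h hh x => ?_, fun g x => rfl⟩
        rw [Stmt13Aux.sgnP_eq_one hsum hpos hnd h]
        norm_num
    rw [hspan]
    apply finrank_span_singleton
    intro hzero
    have h := congrFun hzero 1
    norm_num at h
  · rw [if_neg hnd]
    have hbot : InvInd n l = ⊥ := by
      rw [Submodule.eq_bot_iff]
      intro f hf
      obtain ⟨hf1, hf2⟩ := hf
      obtain ⟨σ, hσn, hσs⟩ := Stmt13Aux.exists_neg hsum hpos hsort hnd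
      have hconst : ∀ x, f x = f 1 := by
        intro x
        have h := hf2 x 1
        rwa [one_mul] at h
      have h1 := hf1 σ hσn 1
      rw [hσs, mul_one, hconst σ] at h1
      have hf10 : f 1 = 0 := by push_cast at h1; linarith
      funext x
      simp [hconst x, hf10]
    rw [hbot, finrank_bot]
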